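/- Let D be a division ring, let A be an n×n matrix over D and B an m×m matrix over D. Suppose there exists a polynomial p in one variable with coefficients in the center of D such that p(A) = 0 and p(B) is invertible. Then for every n×m matrix C over D, the Sylvester equation A·X − X·B = C has a unique solution X in the n×m matrices over D. -/
import Mathlib

open Polynomial Finset

noncomputable def QQ {D : Type*} [DivisionRing D] {n m : ℕ}
    (A : Matrix (Fin n) (Fin n) D) (B : Matrix (Fin m) (Fin m) D)
    (p : Polynomial (Subring.center D)) (Y : Matrix (Fin n) (Fin m) D) :
    Matrix (Fin n) (Fin m) D :=
  ∑ k ∈ Finset.range (p.natDegree + 1), ∑ i ∈ Finset.range k,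
    p.coeff k • (A ^ i * Y * B ^ (k - 1 - i))

lemma QQ_key {D : Type*} [DivisionRing D] {n m : ℕ}
    (A : Matrix (Fin n) (Fin n) D) (B : Matrix (Fin m) (Fin m) D)
    (p : Polynomial (Subring.center D)) (X : Matrix (Fin n) (Fin m) D) :
    QQ A B p (A * X - X * B) =
      (Polynomial.aeval A p) * X - X * (Polynomial.aeval B p) := by
  have h1 : ∀ k ∈ Finset.range (p.natDegree + 1),
      (∑ i ∈ Finset.range k, p.coeff k • (A ^ i * (A * X - X * B) * B ^ (k - 1 - i)))
        = p.coeff k • (A ^ k * X - X * B ^ k) := by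
    intro k _
    have : ∀ i ∈ Finset.range k,
        p.coeff k • (A ^ i * (A * X - X * B) * B ^ (k - 1 - i))
          = p.coeff k • ((A ^ (i+1) * X * B ^ (k - (i+1))) - (A ^ i * X * B ^ (k - i))) := by
      intro i hi
      rw [Finset.mem_range] at hi
      congr 1
      have hj : k - 1 - i = k - (i + 1) := by omega
      have hj2 : k - (i + 1) + 1 = k - i := by omega
      rw [hj, Matrix.mul_sub, Matrix.sub_mul]
      congr 1
      · rw [← Matrix.mul_assoc, ← pow_succ]
      · rw [← Matrix.mul_assoc, Matrix.mul_assoc (A ^ i * X), ← pow_succ', hj2]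
    rw [Finset.sum_congr rfl this, ← Finset.smul_sum, Finset.sum_range_sub
      (f := fun i => A ^ i * X * B ^ (k - i))]
    simp
  rw [QQ, Finset.sum_congr rfl h1]
  have hA' := Polynomial.aeval_eq_sum_range (R := Subring.center D) (p := p) A
  have hB' := Polynomial.aeval_eq_sum_range (R := Subring.center D) (p := p) B
  rw [hA', hB', Matrix.sum_mul, Matrix.mul_sum, ← Finset.sum_sub_distrib]
  refine Finset.sum_congr rfl fun k _ => ?_
  rw [smul_sub, Matrix.smul_mul, Matrix.mul_smul]

lemma QQ_comm {D : Type*} [DivisionRing D] {n m : ℕ}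
    (A : Matrix (Fin n) (Fin n) D) (B : Matrix (Fin m) (Fin m) D)
    (p : Polynomial (Subring.center D)) (Y : Matrix (Fin n) (Fin m) D) :
    A * QQ A B p Y - QQ A B p Y * B = QQ A B p (A * Y - Y * B) := by
  rw [QQ, QQ, Matrix.mul_sum, Matrix.sum_mul, ← Finset.sum_sub_distrib]
  refine Finset.sum_congr rfl fun k _ => ?_
  rw [Matrix.mul_sum, Matrix.sum_mul, ← Finset.sum_sub_distrib]
  refine Finset.sum_congr rfl fun i _ => ?_
  rw [Matrix.mul_smul, Matrix.smul_mul, ← smul_sub]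
  congr 1
  rw [Matrix.mul_sub, Matrix.sub_mul]
  congr 1
  · rw [← Matrix.mul_assoc, ← Matrix.mul_assoc, ← pow_succ', ← Matrix.mul_assoc, ← pow_succ]
  · rw [Matrix.mul_assoc (A ^ i * Y), ← pow_succ, ← Matrix.mul_assoc,
      Matrix.mul_assoc (A ^ i * Y), ← pow_succ']

/-- Sylvester equation over a division ring. -/
theorem stmt_2 (D : Type*) [DivisionRing D] {n m : ℕ}
    (A : Matrix (Fin n) (Fin n) D) (B : Matrix (Fin m) (Fin m) D)
    (p : Polynomial (Subring.center D))
    (hA : Polynomial.aeval A p = 0)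
    (hB : IsUnit (Polynomial.aeval B p)) :
    ∀ C : Matrix (Fin n) (Fin m) D,
      ∃! X : Matrix (Fin n) (Fin m) D, A * X - X * B = C := by
  intro C
  obtain ⟨v, hv1, hv2⟩ : ∃ v : Matrix (Fin m) (Fin m) D,
      Polynomial.aeval B p * v = 1 ∧ v * Polynomial.aeval B p = 1 := by
    obtain ⟨w, hw⟩ := hB
    exact ⟨w.inv, by rw [← hw]; exact w.val_inv, by rw [← hw]; exact w.inv_val⟩
  have key : ∀ X : Matrix (Fin n) (Fin m) D,
      QQ A B p (A * X - X * B) = -(X * Polynomial.aeval B p) := by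
    intro X
    rw [QQ_key, hA, Matrix.zero_mul, zero_sub]
  have hsol : A * QQ A B p (-(C * v)) - QQ A B p (-(C * v)) * B = C := by
    rw [QQ_comm, key, Matrix.neg_mul, neg_neg, Matrix.mul_assoc, hv2, Matrix.mul_one]
  refine ⟨QQ A B p (-(C * v)), hsol, ?_⟩
  intro y hy
  set X := QQ A B p (-(C * v)) with hX
  have hdiff : A * (y - X) - (y - X) * B = 0 := by
    have : A * (y - X) - (y - X) * B = (A * y - y * B) - (A * X - X * B) := by
      rw [Matrix.mul_sub, Matrix.sub_mul]; abel
    rw [this, hy, hsol, sub_self]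
  have h0 := key (y - X)
  rw [hdiff] at h0
  have hQ0 : QQ A B p 0 = 0 := by simp [QQ]
  rw [hQ0, eq_comm, neg_eq_zero] at h0
  have := congrArg (· * v) h0
  simp only [Matrix.mul_assoc, hv1, Matrix.mul_one, Matrix.zero_mul] at this
  exact sub_eq_zero.mp this
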